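/- arXiv:1901.05037 — 2 statements merged into one kernel-verified Lean document; each statement's English description precedes it below -/
import Mathlib

section
/- Perturbation of supersolutions: Assume (H2) and (H3). Let V : [0,T]×ℝⁿ → ℝ be a bounded lower semicontinuous viscosity supersolution of equation (HJB1) on [0,T)×ℝⁿ. Define the constant ψ := e^T‖f‖_∞ + k, and for an integer m ≥ 1 set V_m := (1 − 1/m)V + (1/m)ψ. Then V_m is a viscosity supersolution of the perturbed equation min{U(t,x) − ∂ₜU(t,x) − LU(t,x) − e^t f(t,x), U(t,x) − (M̃U)(t,x)} − k/m = 0 on [0,T)×ℝⁿ; that is, for every (t₀,x₀) ∈ [0,T)×ℝⁿ and every φ ∈ C^{1,2}([0,T)×ℝⁿ) such that V_m − φ has a local minimum at (t₀,x₀) with V_m(t₀,x₀) = φ(t₀,x₀), one has min{V_m(t₀,x₀) − ∂ₜφ(t₀,x₀) − Lφ(t₀,x₀) − e^{t₀}f(t₀,x₀), V_m(t₀,x₀) − (M̃V_m)(t₀,x₀)} ≥ k/m. -/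
open scoped BigOperators RealInnerProductSpace
open Filter Matrix Set Topology

noncomputable section

/-- Euclidean state space ℝⁿ. -/
abbrev EucSp (n : ℕ) := EuclideanSpace ℝ (Fin n)

variable {n d : ℕ}

/-- The parabolic domain `[0, T) × ℝⁿ`. -/
def pdom (T : ℝ) (n : ℕ) : Set (ℝ × EucSp n) := Set.Ico (0 : ℝ) T ×ˢ (Set.univ : Set (EucSp n))

/-- Time derivative `∂ₜφ(t,x)`. -/
def tderiv (φ : ℝ → EucSp n → ℝ) (t : ℝ) (x : EucSp n) : ℝ :=
  deriv (fun s => φ s x) t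

/-- Spatial gradient `∇ₓφ(t,x)`. -/
def xgrad (φ : ℝ → EucSp n → ℝ) (t : ℝ) (x : EucSp n) : EucSp n :=
  gradient (fun y => φ t y) x

/-- Spatial Hessian matrix `∇ₓ²φ(t,x)`. -/
def xhess (φ : ℝ → EucSp n → ℝ) (t : ℝ) (x : EucSp n) : Matrix (Fin n) (Fin n) ℝ :=
  fun i j => fderiv ℝ (fun y => xgrad φ t y) x (EuclideanSpace.single j 1) i

/-- The second order operator `Lφ(t,x) = ⟨b, ∇ₓφ⟩ + ½ tr[σσᵀ ∇ₓ²φ]`. -/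
def Lop (b : ℝ → EucSp n → EucSp n) (σ : ℝ → EucSp n → Matrix (Fin n) (Fin d) ℝ)
    (φ : ℝ → EucSp n → ℝ) (t : ℝ) (x : EucSp n) : ℝ :=
  ⟪b t x, xgrad φ t x⟫ + (1 / 2) * (σ t x * (σ t x)ᵀ * xhess φ t x).trace

/-- `φ` is of class `C^{1,2}` on the set `s`. -/
structure IsC12On (φ : ℝ → EucSp n → ℝ) (s : Set (ℝ × EucSp n)) : Prop where
  cont : ContinuousOn (fun p : ℝ × EucSp n => φ p.1 p.2) s
  diff_t : ∀ p ∈ s, DifferentiableAt ℝ (fun t => φ t p.2) p.1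
  cont_t : ContinuousOn (fun p : ℝ × EucSp n => tderiv φ p.1 p.2) s
  diff_x : ∀ p ∈ s, DifferentiableAt ℝ (fun y => φ p.1 y) p.2
  diff_grad : ∀ p ∈ s, DifferentiableAt ℝ (fun y => xgrad φ p.1 y) p.2
  cont_grad : ContinuousOn (fun p : ℝ × EucSp n => xgrad φ p.1 p.2) s
  cont_hess : ContinuousOn (fun p : ℝ × EucSp n => xhess φ p.1 p.2) s

/-- The intervention operator `(MW)(t,x) = sup_{ξ∈K} [W(t,x+ξ) − c(t,x,ξ)]`. -/
def Mop (K : Set (EucSp n)) (c : ℝ → EucSp n → EucSp n → ℝ) (W : ℝ → EucSp n → ℝ)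
    (t : ℝ) (x : EucSp n) : ℝ :=
  sSup ((fun ξ => W t (x + ξ) - c t x ξ) '' K)

/-- The intervention operator `(M̃W)(t,x) = sup_{ξ∈K} [W(t,x+ξ) − e^t c(t,x,ξ)]`. -/
def Mtop (K : Set (EucSp n)) (c : ℝ → EucSp n → EucSp n → ℝ) (W : ℝ → EucSp n → ℝ)
    (t : ℝ) (x : EucSp n) : ℝ :=
  sSup ((fun ξ => W t (x + ξ) - Real.exp t * c t x ξ) '' K)

/-- Upper semicontinuous envelope, limits taken with `s < T`. -/
def uscEnvT (T : ℝ) (W : ℝ → EucSp n → ℝ) (t : ℝ) (x : EucSp n) : ℝ :=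
  limsup (fun p : ℝ × EucSp n => W p.1 p.2) (𝓝[{p : ℝ × EucSp n | p.1 < T}] (t, x))

/-- Lower semicontinuous envelope, limits taken with `s < T`. -/
def lscEnvT (T : ℝ) (W : ℝ → EucSp n → ℝ) (t : ℝ) (x : EucSp n) : ℝ :=
  liminf (fun p : ℝ × EucSp n => W p.1 p.2) (𝓝[{p : ℝ × EucSp n | p.1 < T}] (t, x))

/-- Quadratic form `⟨Xv, v⟩` of a matrix. -/
def qform (X : Matrix (Fin n) (Fin n) ℝ) (v : EucSp n) : ℝ :=
  ∑ i, ∑ j, X i j * v j * v i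

/-- Parabolic subjet membership: `(p,q,X) ∈ J^{2,−}V(t,x)`. -/
def InSubjet (V : ℝ → EucSp n → ℝ) (t : ℝ) (x : EucSp n)
    (p : ℝ) (q : EucSp n) (X : Matrix (Fin n) (Fin n) ℝ) : Prop :=
  X.IsSymm ∧
  ∀ ε > (0 : ℝ), ∀ᶠ sy : ℝ × EucSp n in 𝓝 (t, x),
    V sy.1 sy.2 ≥ V t x + p * (sy.1 - t) + ⟪q, sy.2 - x⟫
      + (1 / 2) * qform X (sy.2 - x) - ε * (|sy.1 - t| + ‖sy.2 - x‖ ^ 2)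

/-- Parabolic superjet membership: `(p,q,X) ∈ J^{2,+}V(t,x)`. -/
def InSuperjet (V : ℝ → EucSp n → ℝ) (t : ℝ) (x : EucSp n)
    (p : ℝ) (q : EucSp n) (X : Matrix (Fin n) (Fin n) ℝ) : Prop :=
  X.IsSymm ∧
  ∀ ε > (0 : ℝ), ∀ᶠ sy : ℝ × EucSp n in 𝓝 (t, x),
    V sy.1 sy.2 ≤ V t x + p * (sy.1 - t) + ⟪q, sy.2 - x⟫
      + (1 / 2) * qform X (sy.2 - x) + ε * (|sy.1 - t| + ‖sy.2 - x‖ ^ 2)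

/-- Viscosity supersolution of equation (HJB1) on `[0,T) × ℝⁿ` (interior condition only). -/
def IsSuperHJB1Int (T : ℝ) (b : ℝ → EucSp n → EucSp n)
    (σ : ℝ → EucSp n → Matrix (Fin n) (Fin d) ℝ)
    (f : ℝ → EucSp n → ℝ) (K : Set (EucSp n))
    (c : ℝ → EucSp n → EucSp n → ℝ) (V : ℝ → EucSp n → ℝ) : Prop :=
  ∀ t₀ x₀, (t₀, x₀) ∈ pdom T n → ∀ φ : ℝ → EucSp n → ℝ, IsC12On φ (pdom T n) →
    IsLocalMinOn (fun p : ℝ × EucSp n => V p.1 p.2 - φ p.1 p.2) (pdom T n) (t₀, x₀) →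
    0 ≤ min (V t₀ x₀ - tderiv φ t₀ x₀ - Lop b σ φ t₀ x₀ - Real.exp t₀ * f t₀ x₀)
        (V t₀ x₀ - Mtop K c V t₀ x₀)

section PerturbHelpers

variable {n d : ℕ}

lemma tderiv_affine (φ : ℝ → EucSp n → ℝ) (a C t : ℝ) (x : EucSp n) :
    tderiv (fun s y => a * φ s y + C) t x = a * tderiv φ t x := by
  unfold tderiv
  rw [deriv_add_const, deriv_const_mul_field]

lemma xgrad_affine (φ : ℝ → EucSp n → ℝ) (a C t : ℝ) (x : EucSp n)
    (hd : DifferentiableAt ℝ (fun y => φ t y) x) :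
    xgrad (fun s y => a * φ s y + C) t x = a • xgrad φ t x := by
  unfold xgrad gradient
  have h1 : (fun y => a * φ t y + C) = fun y => a • φ t y + C := by
    funext y; simp [smul_eq_mul]
  rw [h1, fderiv_add_const, fderiv_fun_const_smul hd, _root_.map_smul]

lemma xhess_affine (φ : ℝ → EucSp n → ℝ) (a C t : ℝ) (x : EucSp n)
    (hdall : ∀ y, DifferentiableAt ℝ (fun y' => φ t y') y)
    (hg : DifferentiableAt ℝ (fun y => xgrad φ t y) x) :
    xhess (fun s y => a * φ s y + C) t x = a • xhess φ t x := by
  have h1 : (fun y => xgrad (fun s y' => a * φ s y' + C) t y) = fun y => a • xgrad φ t y :=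
    funext fun y => xgrad_affine φ a C t y (hdall y)
  funext i j
  show fderiv ℝ (fun y => xgrad (fun s y' => a * φ s y' + C) t y) x
      (EuclideanSpace.single j 1) i = _
  rw [h1, fderiv_fun_const_smul hg]
  simp [Matrix.smul_apply, xhess, smul_eq_mul]

lemma Lop_affine (b : ℝ → EucSp n → EucSp n) (σ : ℝ → EucSp n → Matrix (Fin n) (Fin d) ℝ)
    (φ : ℝ → EucSp n → ℝ) (a C t : ℝ) (x : EucSp n)
    (hdall : ∀ y, DifferentiableAt ℝ (fun y' => φ t y') y)
    (hg : DifferentiableAt ℝ (fun y => xgrad φ t y) x) :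
    Lop b σ (fun s y => a * φ s y + C) t x = a * Lop b σ φ t x := by
  unfold Lop
  rw [xgrad_affine φ a C t x (hdall x), xhess_affine φ a C t x hdall hg,
    real_inner_smul_right, Matrix.mul_smul, Matrix.trace_smul, smul_eq_mul]
  ring

lemma IsC12On.affine {T : ℝ} {φ : ℝ → EucSp n → ℝ} (h : IsC12On φ (pdom T n)) (a C : ℝ) :
    IsC12On (fun s y => a * φ s y + C) (pdom T n) := by
  have hmem : ∀ p : ℝ × EucSp n, p ∈ pdom T n → ∀ y : EucSp n, ((p.1, y) : ℝ × EucSp n) ∈ pdom T n := by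
    intro p hp y
    exact ⟨(Set.mem_prod.mp hp).1, Set.mem_univ y⟩
  constructor
  · exact (continuousOn_const.mul h.cont).add continuousOn_const
  · intro p hp
    exact ((h.diff_t p hp).const_mul a).add_const C
  · have : (fun p : ℝ × EucSp n => tderiv (fun s y => a * φ s y + C) p.1 p.2)
        = fun p => a * tderiv φ p.1 p.2 := funext fun p => tderiv_affine φ a C p.1 p.2
    rw [this]
    exact continuousOn_const.mul h.cont_t
  · intro p hp
    exact ((h.diff_x p hp).const_mul a).add_const C
  · intro p hp
    have heq : (fun y => xgrad (fun s y' => a * φ s y' + C) p.1 y)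
        = fun y => a • xgrad φ p.1 y :=
      funext fun y => xgrad_affine φ a C p.1 y (h.diff_x (p.1, y) (hmem p hp y))
    rw [heq]
    exact (h.diff_grad p hp).const_smul a
  · apply (h.cont_grad.const_smul a).congr
    intro p hp
    exact xgrad_affine φ a C p.1 p.2 (h.diff_x p hp)
  · apply (h.cont_hess.const_smul a).congr
    intro p hp
    exact xhess_affine φ a C p.1 p.2 (fun y => h.diff_x (p.1, y) (hmem p hp y))
      (h.diff_grad p hp)

lemma deriv_nonpos_of_isLocalMaxOn_Ico {g : ℝ → ℝ} {t₀ T : ℝ} (ht : t₀ ∈ Set.Ico 0 T)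
    (hmax : IsLocalMaxOn g (Set.Ico 0 T) t₀) (hd : DifferentiableAt ℝ g t₀) :
    deriv g t₀ ≤ 0 := by
  have hmid : t₀ < (t₀ + T) / 2 := by linarith [ht.2]
  have hseg : segment ℝ t₀ ((t₀ + T) / 2) ⊆ Set.Ico 0 T := by
    rw [segment_eq_Icc hmid.le]
    intro s hs
    exact ⟨le_trans ht.1 hs.1, lt_of_le_of_lt hs.2 (by linarith [ht.2])⟩
  have hy := sub_mem_posTangentConeAt_of_segment_subset hseg
  have hle := hmax.hasFDerivWithinAt_nonpos (hd.hasFDerivAt.hasFDerivWithinAt) hy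
  have h2 : fderiv ℝ g t₀ ((t₀ + T) / 2 - t₀) = ((t₀ + T) / 2 - t₀) * deriv g t₀ := by
    have h3 : fderiv ℝ g t₀ ((t₀ + T) / 2 - t₀)
        = fderiv ℝ g t₀ (((t₀ + T) / 2 - t₀) • (1 : ℝ)) := by norm_num
    rw [h3, _root_.map_smul, smul_eq_mul, fderiv_apply_one_eq_deriv]
  rw [h2] at hle
  have hfac : 0 < (t₀ + T) / 2 - t₀ := by linarith
  nlinarith

lemma inner_fderiv_grad_nonpos {F : EucSp n → ℝ} {x₀ : EucSp n}
    (hdall : ∀ y, DifferentiableAt ℝ F y)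
    (hg : DifferentiableAt ℝ (fun y => gradient F y) x₀)
    (hmax : IsLocalMax F x₀) (v : EucSp n) :
    ⟪v, fderiv ℝ (fun y => gradient F y) x₀ v⟫ ≤ 0 := by
  set G := fun y => gradient F y with hG
  set A := fderiv ℝ G x₀ with hA
  by_contra hq
  push_neg at hq
  set γ := fun s : ℝ => x₀ + s • v with hγ
  have hγd : ∀ s : ℝ, HasDerivAt γ v s := by
    intro s
    have := ((hasDerivAt_id s).smul_const v).const_add x₀
    rwa [one_smul] at this
  have hγ0 : γ 0 = x₀ := by simp [hγ]
  set g := fun s => F (γ s) with hgdef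
  have hfd : ∀ y, fderiv ℝ F y = InnerProductSpace.toDual ℝ (EucSp n) (G y) :=
    fun y => ((hdall y).hasGradientAt.hasFDerivAt).fderiv
  have hgd : ∀ s, HasDerivAt g ⟪v, G (γ s)⟫ s := by
    intro s
    have h1 : HasDerivAt g (fderiv ℝ F (γ s) v) s :=
      ((hdall (γ s)).hasFDerivAt).comp_hasDerivAt s (hγd s)
    have h2 : fderiv ℝ F (γ s) v = ⟪v, G (γ s)⟫ := by
      rw [hfd, InnerProductSpace.toDual_apply_apply, real_inner_comm]
    rwa [h2] at h1
  have hhd : HasDerivAt (fun s => ⟪v, G (γ s)⟫) ⟪v, A v⟫ 0 := by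
    have h1 : HasDerivAt (fun s => G (γ s)) (A v) 0 := by
      have h2 : HasFDerivAt G A (γ 0) := hγ0 ▸ hg.hasFDerivAt
      exact h2.comp_hasDerivAt 0 (hγd 0)
    have := (innerSL ℝ v).hasFDerivAt.comp_hasDerivAt 0 h1
    exact this
  have hG0 : G x₀ = 0 := by
    have hz := hmax.fderiv_eq_zero
    simp [hG, gradient, hz]
  have hmaxg : ∀ᶠ s in 𝓝 (0 : ℝ), g s ≤ g 0 := by
    have htends : Filter.Tendsto γ (𝓝 0) (𝓝 x₀) := hγ0 ▸ (hγd 0).continuousAt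
    have := htends.eventually hmax
    simpa [hgdef, hγ0] using this
  have hslope := hasDerivAt_iff_tendsto_slope.mp hhd
  have h1 : ∀ᶠ s in 𝓝[≠] (0 : ℝ), 0 < slope (fun s => ⟪v, G (γ s)⟫) 0 s :=
    hslope.eventually (lt_mem_nhds hq)
  have hmono : 𝓝[>] (0 : ℝ) ≤ 𝓝[≠] (0 : ℝ) :=
    nhdsWithin_mono 0 (fun s hs => ne_of_gt hs)
  have hev : ∀ᶠ s in 𝓝[>] (0 : ℝ), 0 < ⟪v, G (γ s)⟫ := by
    filter_upwards [h1.filter_mono hmono, self_mem_nhdsWithin] with s hs hs0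
    have hsl : slope (fun s => ⟪v, G (γ s)⟫) 0 s = ⟪v, G (γ s)⟫ / s := by
      simp [slope_def_field, hγ0, hG0]
    rw [hsl] at hs
    rcases div_pos_iff.mp hs with ⟨h, _⟩ | ⟨_, h⟩
    · exact h
    · exact absurd hs0 (not_lt.mpr h.le)
  have hevg : ∀ᶠ s in 𝓝[>] (0 : ℝ), g s ≤ g 0 := hmaxg.filter_mono nhdsWithin_le_nhds
  obtain ⟨u, hu, hsub⟩ := mem_nhdsGT_iff_exists_Ioo_subset.mp (hev.and hevg)
  have hu0 : (0 : ℝ) < u := hu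
  have hs₀ : u / 2 ∈ Set.Ioo (0 : ℝ) u := ⟨by positivity, by linarith⟩
  have hcont : ContinuousOn g (Set.Icc 0 (u / 2)) :=
    fun s _ => ((hgd s).continuousAt).continuousWithinAt
  obtain ⟨cc, hcc, hceq⟩ := exists_hasDerivAt_eq_slope g (fun s => ⟪v, G (γ s)⟫) hs₀.1
    hcont (fun s _ => hgd s)
  have hc1 : 0 < ⟪v, G (γ cc)⟫ := (hsub ⟨hcc.1, lt_trans hcc.2 hs₀.2⟩).1
  have hc2 : g (u / 2) ≤ g 0 := (hsub hs₀).2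
  rw [hceq] at hc1
  have hnp : (g (u / 2) - g 0) / (u / 2 - 0) ≤ 0 := by
    apply div_nonpos_of_nonpos_of_nonneg <;> linarith
  linarith

lemma qform_eq_inner (A : EucSp n →L[ℝ] EucSp n) (v : EucSp n) :
    qform (fun i j => A (EuclideanSpace.single j 1) i) v = ⟪v, A v⟫ := by
  have hv : v = ∑ j, v j • EuclideanSpace.single j (1 : ℝ) := by
    have h := (EuclideanSpace.basisFun (Fin n) ℝ).sum_repr v
    simp only [EuclideanSpace.basisFun_repr, EuclideanSpace.basisFun_apply] at h
    exact h.symm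
  have hAv : A v = ∑ j, v j • A (EuclideanSpace.single j 1) := by
    conv_lhs => rw [hv]
    rw [map_sum]; simp_rw [_root_.map_smul]
  rw [hAv, inner_sum]
  simp_rw [real_inner_smul_right]
  have hin : ∀ j, (⟪v, A (EuclideanSpace.single j 1)⟫ : ℝ)
      = ∑ i, v i * A (EuclideanSpace.single j 1) i := by
    intro j
    simp [PiLp.inner_apply, RCLike.inner_apply]
    exact Finset.sum_congr rfl fun i _ => mul_comm _ _
  simp_rw [hin]
  unfold qform
  rw [Finset.sum_comm]
  refine Finset.sum_congr rfl fun j _ => ?_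
  rw [Finset.mul_sum]
  exact Finset.sum_congr rfl fun i _ => by ring
lemma trace_mul_mul_nonpos {σm : Matrix (Fin n) (Fin d) ℝ} {H : Matrix (Fin n) (Fin n) ℝ}
    (h : ∀ v : EucSp n, qform H v ≤ 0) : (σm * σmᵀ * H).trace ≤ 0 := by
  have key : (σm * σmᵀ * H).trace
      = ∑ l : Fin d, qform H ((WithLp.equiv 2 (Fin n → ℝ)).symm (fun i => σm i l)) := by
    unfold qform
    simp only [Matrix.trace, Matrix.diag, Matrix.mul_apply, Matrix.transpose_apply,
      WithLp.equiv_symm_apply, PiLp.toLp_apply]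
    simp only [Finset.sum_mul]
    have swap : ∀ F : Fin n → Fin n → Fin d → ℝ,
        ∑ i, ∑ j, ∑ l, F i j l = ∑ l, ∑ i, ∑ j, F i j l := by
      intro F
      have h1 : ∀ i, ∑ j, ∑ l, F i j l = ∑ l, ∑ j, F i j l := fun i => Finset.sum_comm
      simp_rw [h1]
      exact Finset.sum_comm
    refine (swap _).trans (Finset.sum_congr rfl fun l _ => ?_)
    exact Finset.sum_comm.trans
      (Finset.sum_congr rfl fun i _ => Finset.sum_congr rfl fun j _ => by ring)
  rw [key]
  exact Finset.sum_nonpos fun l _ => h _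

end PerturbHelpers
/-- **Perturbation of supersolutions**: if `V` is a bounded lsc viscosity supersolution of
(HJB1), then `V_m = (1 − 1/m) V + (1/m) ψ`, where `ψ = e^T ‖f‖_∞ + k`, is a viscosity
supersolution of the perturbed equation `min{…} − k/m = 0` on `[0,T) × ℝⁿ`. -/
theorem perturbed_supersolution
    {n d : ℕ} (T : ℝ) (hT : 0 < T)
    (b : ℝ → EucSp n → EucSp n) (σ : ℝ → EucSp n → Matrix (Fin n) (Fin d) ℝ)
    (f : ℝ → EucSp n → ℝ)
    -- (H2) for f
    (hf_bdd : ∃ C, ∀ t x, |f t x| ≤ C)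
    (hf_uc : UniformContinuousOn (fun p : ℝ × EucSp n => f p.1 p.2)
      (Set.Icc 0 T ×ˢ Set.univ))
    -- (H3)
    (K : Set (EucSp n)) (hK : K.Nonempty) (hKcomp : IsCompact K)
    (c : ℝ → EucSp n → EucSp n → ℝ)
    (hc_uc : UniformContinuousOn (fun p : ℝ × EucSp n × EucSp n => c p.1 p.2.1 p.2.2)
      (Set.Icc 0 T ×ˢ Set.univ ×ˢ K))
    (k : ℝ) (hk : 0 < k) (hck : ∀ t x, ∀ ξ ∈ K, k ≤ c t x ξ)
    -- the supersolution V
    (V : ℝ → EucSp n → ℝ)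
    (hV_bdd : ∃ C, ∀ t x, |V t x| ≤ C)
    (hV_lsc : LowerSemicontinuousOn (fun p : ℝ × EucSp n => V p.1 p.2)
      (Set.Icc 0 T ×ˢ Set.univ))
    (hV_sup : IsSuperHJB1Int T b σ f K c V)
    -- the constant ψ = e^T ‖f‖_∞ + k and the perturbation V_m
    (ψ : ℝ)
    (hψ : ψ = Real.exp T *
      sSup ((fun p : ℝ × EucSp n => |f p.1 p.2|) '' (Set.Icc 0 T ×ˢ Set.univ)) + k)
    (m : ℕ) (hm : 1 ≤ m)
    (Vm : ℝ → EucSp n → ℝ)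
    (hVm : Vm = fun t x => (1 - 1/(m:ℝ)) * V t x + (1/(m:ℝ)) * ψ) :
    ∀ t₀ x₀, (t₀, x₀) ∈ pdom T n → ∀ φ : ℝ → EucSp n → ℝ, IsC12On φ (pdom T n) →
      IsLocalMinOn (fun p : ℝ × EucSp n => Vm p.1 p.2 - φ p.1 p.2) (pdom T n) (t₀, x₀) →
      Vm t₀ x₀ = φ t₀ x₀ →
      k / m ≤ min (Vm t₀ x₀ - tderiv φ t₀ x₀ - Lop b σ φ t₀ x₀ - Real.exp t₀ * f t₀ x₀)
          (Vm t₀ x₀ - Mtop K c Vm t₀ x₀) := by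
  intro t₀ x₀ hdom φ hφ hmin _hVφ
  have t₀Ico : t₀ ∈ Set.Ico (0 : ℝ) T := (Set.mem_prod.mp hdom).1
  obtain ⟨C₀, hC₀⟩ := hV_bdd
  set S := sSup ((fun p : ℝ × EucSp n => |f p.1 p.2|) '' (Set.Icc 0 T ×ˢ Set.univ)) with hSdef
  obtain ⟨Cf, hCf⟩ := hf_bdd
  have hbddf : BddAbove ((fun p : ℝ × EucSp n => |f p.1 p.2|) '' (Set.Icc 0 T ×ˢ Set.univ)) :=
    ⟨Cf, by rintro _ ⟨p, -, rfl⟩; exact hCf _ _⟩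
  have ht₀Icc : t₀ ∈ Set.Icc (0 : ℝ) T := ⟨t₀Ico.1, t₀Ico.2.le⟩
  have hfS : |f t₀ x₀| ≤ S :=
    le_csSup hbddf ⟨(t₀, x₀), Set.mem_prod.mpr ⟨ht₀Icc, Set.mem_univ _⟩, rfl⟩
  have hS0 : 0 ≤ S := le_trans (abs_nonneg _) hfS
  have hfle : Real.exp t₀ * f t₀ x₀ ≤ Real.exp T * S := by
    have h1 : f t₀ x₀ ≤ S := le_trans (le_abs_self _) hfS
    calc Real.exp t₀ * f t₀ x₀ ≤ Real.exp t₀ * S :=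
          mul_le_mul_of_nonneg_left h1 (Real.exp_pos t₀).le
      _ ≤ Real.exp T * S := mul_le_mul_of_nonneg_right (Real.exp_le_exp.mpr t₀Ico.2.le) hS0
  set μ := 1 / (m : ℝ) with hμ
  have hm0 : (0 : ℝ) < m := by exact_mod_cast Nat.lt_of_lt_of_le Nat.zero_lt_one hm
  have hμpos : 0 < μ := by positivity
  have hμ1 : μ ≤ 1 := by
    rw [hμ, div_le_one hm0]; exact_mod_cast hm
  have hkm : k / (m : ℝ) = μ * k := by rw [hμ]; ring
  -- intervention operator bounds
  have hec : ∀ ξ ∈ K, k ≤ Real.exp t₀ * c t₀ x₀ ξ := by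
    intro ξ hξ
    have h1 : k ≤ c t₀ x₀ ξ := hck t₀ x₀ ξ hξ
    have h2 : (1 : ℝ) ≤ Real.exp t₀ := Real.one_le_exp t₀Ico.1
    nlinarith
  have hbddV : BddAbove ((fun ξ => V t₀ (x₀ + ξ) - Real.exp t₀ * c t₀ x₀ ξ) '' K) := by
    refine ⟨C₀, ?_⟩
    rintro _ ⟨ξ, hξ, rfl⟩
    have h1 := hec ξ hξ
    have h2 := (abs_le.mp (hC₀ t₀ (x₀ + ξ))).2
    simp only
    linarith
  have hMVm : Mtop K c Vm t₀ x₀ ≤ (1 - μ) * Mtop K c V t₀ x₀ + μ * ψ - μ * k := by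
    apply csSup_le (hK.image _)
    rintro _ ⟨ξ, hξ, rfl⟩
    have hVξ : V t₀ (x₀ + ξ) - Real.exp t₀ * c t₀ x₀ ξ ≤ Mtop K c V t₀ x₀ :=
      le_csSup hbddV ⟨ξ, hξ, rfl⟩
    have hecξ := hec ξ hξ
    simp only [hVm]
    have h1μ : 0 ≤ 1 - μ := by linarith
    nlinarith [mul_le_mul_of_nonneg_left hVξ h1μ, mul_le_mul_of_nonneg_left hecξ hμpos.le]
  by_cases hm1 : m = 1
  · -- the case m = 1 : Vm is the constant ψ
    subst hm1
    have hμe : μ = 1 := by rw [hμ]; norm_num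
    have hVmψ : ∀ t x, Vm t x = ψ := by
      intro t x; rw [hVm]; rw [hμe]; ring
    have hmax : IsLocalMaxOn (fun p : ℝ × EucSp n => φ p.1 p.2) (pdom T n) (t₀, x₀) := by
      have h1 : ∀ᶠ p in 𝓝[pdom T n] (t₀, x₀),
          Vm t₀ x₀ - φ t₀ x₀ ≤ Vm p.1 p.2 - φ p.1 p.2 := hmin
      filter_upwards [h1] with p hp
      have e1 := hVmψ t₀ x₀
      have e2 := hVmψ p.1 p.2
      show φ p.1 p.2 ≤ φ t₀ x₀
      linarith
    -- time derivative is nonpositive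
    have hdt : tderiv φ t₀ x₀ ≤ 0 := by
      have htmap : Filter.Tendsto (fun s : ℝ => ((s, x₀) : ℝ × EucSp n))
          (𝓝[Set.Ico (0 : ℝ) T] t₀) (𝓝[pdom T n] (t₀, x₀)) := by
        apply tendsto_nhdsWithin_of_tendsto_nhds_of_eventually_within
        · exact ((continuous_id.prodMk continuous_const).tendsto t₀).mono_left
            nhdsWithin_le_nhds
        · filter_upwards [self_mem_nhdsWithin] with s hs
          exact Set.mem_prod.mpr ⟨hs, Set.mem_univ _⟩
      have hmaxt : IsLocalMaxOn (fun s : ℝ => φ s x₀) (Set.Ico (0 : ℝ) T) t₀ :=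
        htmap.eventually hmax
      exact deriv_nonpos_of_isLocalMaxOn_Ico t₀Ico hmaxt (hφ.diff_t (t₀, x₀) hdom)
    -- spatial local max
    have hxmax : IsLocalMax (fun y => φ t₀ y) x₀ := by
      have hxmap : Filter.Tendsto (fun y : EucSp n => ((t₀, y) : ℝ × EucSp n)) (𝓝 x₀)
          (𝓝[pdom T n] (t₀, x₀)) := by
        apply tendsto_nhdsWithin_of_tendsto_nhds_of_eventually_within
        · exact (continuous_const.prodMk continuous_id).tendsto x₀
        · exact Filter.Eventually.of_forall fun y => Set.mem_prod.mpr ⟨t₀Ico, Set.mem_univ _⟩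
      exact hxmap.eventually hmax
    have hgrad0 : xgrad φ t₀ x₀ = 0 := by
      have hz := hxmax.fderiv_eq_zero
      simp [xgrad, gradient, hz]
    have hhess : ∀ v : EucSp n, qform (xhess φ t₀ x₀) v ≤ 0 := by
      intro v
      have hdall : ∀ y, DifferentiableAt ℝ (fun y' => φ t₀ y') y :=
        fun y => hφ.diff_x (t₀, y) (Set.mem_prod.mpr ⟨t₀Ico, Set.mem_univ _⟩)
      have hg : DifferentiableAt ℝ (fun y => gradient (fun y' => φ t₀ y') y) x₀ :=
        hφ.diff_grad (t₀, x₀) hdom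
      have h1 : ⟪v, fderiv ℝ (fun y => gradient (fun y' => φ t₀ y') y) x₀ v⟫ ≤ 0 :=
        inner_fderiv_grad_nonpos hdall hg hxmax v
      have h2 : qform (xhess φ t₀ x₀) v
          = ⟪v, fderiv ℝ (fun y => gradient (fun y' => φ t₀ y') y) x₀ v⟫ :=
        qform_eq_inner (fderiv ℝ (fun y => gradient (fun y' => φ t₀ y') y) x₀) v
      linarith [h2 ▸ h1]
    have hLop : Lop b σ φ t₀ x₀ ≤ 0 := by
      unfold Lop
      rw [hgrad0, inner_zero_right]
      have htr := trace_mul_mul_nonpos (σm := σ t₀ x₀) hhess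
      linarith
    have comp1 : k / ((1 : ℕ) : ℝ) ≤ Vm t₀ x₀ - tderiv φ t₀ x₀ - Lop b σ φ t₀ x₀
        - Real.exp t₀ * f t₀ x₀ := by
      rw [hVmψ t₀ x₀, hψ]
      norm_num
      linarith
    have comp2 : k / ((1 : ℕ) : ℝ) ≤ Vm t₀ x₀ - Mtop K c Vm t₀ x₀ := by
      rw [hVmψ t₀ x₀]
      rw [hμe] at hMVm
      norm_num at hMVm ⊢
      linarith
    exact le_min comp1 comp2
  · -- the case m ≥ 2
    have hmlt : 1 < m := Nat.lt_of_le_of_ne hm fun h => hm1 h.symm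
    have hμlt : μ < 1 := by
      rw [hμ, div_lt_one hm0]; exact_mod_cast hmlt
    have hlam0 : (0 : ℝ) < 1 - μ := by linarith
    set a := 1 / (1 - μ) with ha
    set Cc := -(μ * ψ) / (1 - μ) with hCc
    have hla : (1 - μ) * a = 1 := by
      rw [ha]; field_simp
    set φt := fun s (y : EucSp n) => a * φ s y + Cc with hφt
    have hminV : IsLocalMinOn (fun p : ℝ × EucSp n => V p.1 p.2 - φt p.1 p.2)
        (pdom T n) (t₀, x₀) := by
      have h1 : ∀ᶠ p in 𝓝[pdom T n] (t₀, x₀),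
          Vm t₀ x₀ - φ t₀ x₀ ≤ Vm p.1 p.2 - φ p.1 p.2 := hmin
      filter_upwards [h1] with p hp
      show V t₀ x₀ - φt t₀ x₀ ≤ V p.1 p.2 - φt p.1 p.2
      simp only [hVm] at hp
      simp only [hφt]
      have e1 : ∀ w z : ℝ, (1 - μ) * (w - (a * z + Cc))
          = (1 - μ) * w - z - (1 - μ) * Cc := by
        intro w z
        rw [mul_sub, mul_add, ← mul_assoc, hla, one_mul]
        ring
      have h2 : (1 - μ) * (V t₀ x₀ - (a * φ t₀ x₀ + Cc))
          ≤ (1 - μ) * (V p.1 p.2 - (a * φ p.1 p.2 + Cc)) := by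
        rw [e1, e1]; linarith
      exact le_of_mul_le_mul_left h2 hlam0
    have hsup := hV_sup t₀ x₀ hdom φt (hφ.affine a Cc) hminV
    rw [le_min_iff] at hsup
    obtain ⟨hsup1, hsup2⟩ := hsup
    have hdallx : ∀ y, DifferentiableAt ℝ (fun y' => φ t₀ y') y :=
      fun y => hφ.diff_x (t₀, y) (Set.mem_prod.mpr ⟨t₀Ico, Set.mem_univ _⟩)
    have htd : tderiv φt t₀ x₀ = a * tderiv φ t₀ x₀ := tderiv_affine φ a Cc t₀ x₀
    have hLd : Lop b σ φt t₀ x₀ = a * Lop b σ φ t₀ x₀ :=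
      Lop_affine b σ φ a Cc t₀ x₀ hdallx (hφ.diff_grad (t₀, x₀) hdom)
    rw [htd, hLd] at hsup1
    have hVm00 : Vm t₀ x₀ = (1 - μ) * V t₀ x₀ + μ * ψ := by rw [hVm]
    have comp1 : k / (m : ℝ) ≤ Vm t₀ x₀ - tderiv φ t₀ x₀ - Lop b σ φ t₀ x₀
        - Real.exp t₀ * f t₀ x₀ := by
      have h3 : 0 ≤ (1 - μ) * (V t₀ x₀ - a * tderiv φ t₀ x₀ - a * Lop b σ φ t₀ x₀
          - Real.exp t₀ * f t₀ x₀) := mul_nonneg hlam0.le hsup1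
      have h4 : (1 - μ) * (a * tderiv φ t₀ x₀) = tderiv φ t₀ x₀ := by
        rw [← mul_assoc, hla, one_mul]
      have h5 : (1 - μ) * (a * Lop b σ φ t₀ x₀) = Lop b σ φ t₀ x₀ := by
        rw [← mul_assoc, hla, one_mul]
      have h3' : 0 ≤ (1 - μ) * V t₀ x₀ - tderiv φ t₀ x₀ - Lop b σ φ t₀ x₀
          - (1 - μ) * (Real.exp t₀ * f t₀ x₀) := by
        rw [mul_sub, mul_sub, mul_sub, h4, h5] at h3
        linarith
      have h6 : μ * (Real.exp t₀ * f t₀ x₀) ≤ μ * (Real.exp T * S) :=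
        mul_le_mul_of_nonneg_left hfle hμpos.le
      have h7 : (1 - μ) * (Real.exp t₀ * f t₀ x₀)
          = Real.exp t₀ * f t₀ x₀ - μ * (Real.exp t₀ * f t₀ x₀) := by ring
      have h8 : μ * ψ = μ * (Real.exp T * S) + μ * k := by rw [hψ]; ring
      linarith [h3', h6, h7, h8, hVm00, hkm]
    have comp2 : k / (m : ℝ) ≤ Vm t₀ x₀ - Mtop K c Vm t₀ x₀ := by
      have h9 : 0 ≤ (1 - μ) * V t₀ x₀ - (1 - μ) * Mtop K c V t₀ x₀ := by
        have := mul_nonneg hlam0.le hsup2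
        linarith [mul_sub (1 - μ) (V t₀ x₀) (Mtop K c V t₀ x₀), this]
      linarith [hMVm, h9, hVm00, hkm]
    exact le_min comp1 comp2
end
end

section
/- Terminal-time identification: Let K ⊆ ℝⁿ be a nonempty compact set, k > 0, and c : ℝⁿ×K → ℝ a continuous function with c(x,ξ) ≥ k for all (x,ξ). Let g : ℝⁿ → ℝ and let W : ℝⁿ → ℝ be bounded and upper semicontinuous. Assume: (i) for every x ∈ ℝⁿ, min{ W(x) − g(x), W(x) − sup_{ξ∈K}[W(x+ξ) − c(x,ξ)] } = 0; and (ii) for every x ∈ ℝⁿ, sup_{ξ∈K}[g(x+ξ) − c(x,ξ)] ≤ g(x). Then W(x) = g(x) for every x ∈ ℝⁿ. -/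
open scoped BigOperators RealInnerProductSpace
open Filter Matrix Set Topology

noncomputable section

variable {n d : ℕ}

/-- **Terminal-time identification**: if a bounded usc `W` satisfies
`min{W − g, W − sup_{ξ∈K}[W(·+ξ) − c(·,ξ)]} = 0` and no impulse at maturity is profitable
(`sup_{ξ∈K}[g(x+ξ) − c(x,ξ)] ≤ g(x)`), then `W = g`. -/
theorem terminal_time_identification
    {n : ℕ} (K : Set (EucSp n)) (hK : K.Nonempty) (hKcomp : IsCompact K)
    (k : ℝ) (hk : 0 < k)
    (c : EucSp n → EucSp n → ℝ)
    (hc_cont : Continuous fun p : EucSp n × EucSp n => c p.1 p.2)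
    (hck : ∀ x ξ, k ≤ c x ξ)
    (g : EucSp n → ℝ) (W : EucSp n → ℝ)
    (hW_bdd : ∃ C, ∀ x, |W x| ≤ C)
    (hW_usc : UpperSemicontinuous W)
    (h1 : ∀ x, min (W x - g x) (W x - sSup ((fun ξ => W (x + ξ) - c x ξ) '' K)) = 0)
    (h2 : ∀ x, sSup ((fun ξ => g (x + ξ) - c x ξ) '' K) ≤ g x) :
    ∀ x, W x = g x := by
  obtain ⟨C, hC⟩ := hW_bdd
  have hWg : ∀ x, g x ≤ W x := by
    intro x
    have h := min_le_left (W x - g x) (W x - sSup ((fun ξ => W (x + ξ) - c x ξ) '' K))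
    rw [h1 x] at h; linarith
  have step : ∀ x, g x < W x → ∃ y, g y < W y ∧ W x + k / 2 ≤ W y := by
    intro x hx
    have hS : W x = sSup ((fun ξ => W (x + ξ) - c x ξ) '' K) := by
      rcases min_eq_iff.mp (h1 x) with ⟨h, _⟩ | ⟨h, _⟩
      · linarith
      · linarith
    set δ := min (k / 2) ((W x - g x) / 2) with hδdef
    have hδ : 0 < δ := lt_min (by linarith) (by linarith)
    have hδ1 : δ ≤ k / 2 := min_le_left _ _
    have hδ2 : δ ≤ (W x - g x) / 2 := min_le_right _ _
    have hlt : W x - δ < sSup ((fun ξ => W (x + ξ) - c x ξ) '' K) := by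
      rw [← hS]; linarith
    obtain ⟨a, ⟨ξ, hξK, rfl⟩, ha⟩ := exists_lt_of_lt_csSup (hK.image _) hlt
    simp only at ha
    by_cases hcase : g (x + ξ) < W (x + ξ)
    · exact ⟨x + ξ, hcase, by have := hck x ξ; linarith⟩
    · exfalso
      have heq : W (x + ξ) = g (x + ξ) := le_antisymm (not_lt.mp hcase) (hWg _)
      have hmem : g (x + ξ) - c x ξ ∈ (fun ξ => g (x + ξ) - c x ξ) '' K := ⟨ξ, hξK, rfl⟩
      have hbdd : BddAbove ((fun ξ => g (x + ξ) - c x ξ) '' K) := by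
        refine ⟨C, ?_⟩
        rintro a ⟨η, hη, rfl⟩
        have hb1 := hWg (x + η)
        have hb2 := (abs_le.mp (hC (x + η))).2
        have hb3 := hck x η
        simp only
        linarith
      have hfin := le_trans (le_csSup hbdd hmem) (h2 x)
      linarith
  by_contra hcon
  push_neg at hcon
  obtain ⟨x0, hx0⟩ := hcon
  have hx0' : g x0 < W x0 := lt_of_le_of_ne (hWg x0) (Ne.symm hx0)
  have key : ∀ m : ℕ, ∃ y, g y < W y ∧ W x0 + m * (k / 2) ≤ W y := by
    intro m
    induction m with
    | zero => exact ⟨x0, hx0', by simp⟩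
    | succ m ih =>
      obtain ⟨y, hy, hle⟩ := ih
      obtain ⟨z, hz, hle'⟩ := step y hy
      refine ⟨z, hz, ?_⟩
      push_cast
      linarith
  obtain ⟨m, hm⟩ := exists_nat_gt ((C - W x0) / (k / 2))
  obtain ⟨y, _, hy⟩ := key m
  have hb := (abs_le.mp (hC y)).2
  have hmul : (C - W x0) / (k / 2) * (k / 2) < m * (k / 2) :=
    mul_lt_mul_of_pos_right hm (by linarith)
  rw [div_mul_cancel₀ _ (by linarith : (k / 2 : ℝ) ≠ 0)] at hmul
  linarith
end
end
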